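/- arXiv:0907.5593 — 2 statements merged into one kernel-verified Lean document; each statement's English description precedes it below -/
import Mathlib

section
/- For every natural number n there exist constants C > 0 and δ > 0 such that for all real λ with 0 < λ < δ one has |Z(λ) − Σ_{k=0}^{n−1} u_k(λ)| ≤ C·λ^n. In other words, the formal perturbative power series Σ_{k≥0} u_k(λ) is an asymptotic expansion of Z(λ) as λ → 0⁺. -/
open MeasureTheory

noncomputable section

/-- partial sums of exp(-x) -/
def S (n : ℕ) (x : ℝ) : ℝ := ∑ k ∈ Finset.range n, (-x) ^ k / (Nat.factorial k : ℝ)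

lemma hasDerivAt_S (n : ℕ) (x : ℝ) : HasDerivAt (S (n + 1)) (-(S n x)) x := by
  induction n with
  | zero =>
    have : S 1 = fun _ : ℝ => (1 : ℝ) := by
      funext y; simp [S]
    rw [this]
    simpa [S] using (hasDerivAt_const x (1 : ℝ))
  | succ n ih =>
    have h1 : S (n + 2) = fun y : ℝ => S (n + 1) y + (-y) ^ (n + 1) / (Nat.factorial (n + 1) : ℝ) := by
      funext y; simp [S, Finset.sum_range_succ]
    rw [h1]
    have hterm : HasDerivAt (fun y : ℝ => (-y) ^ (n + 1) / (Nat.factorial (n + 1) : ℝ))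
        (-((-x) ^ n / (Nat.factorial n : ℝ))) x := by
      have h := ((hasDerivAt_pow (n + 1) (-x)).comp x (hasDerivAt_neg x)).div_const
        ((Nat.factorial (n + 1) : ℝ))
      refine h.congr_deriv ?_
      rw [Nat.add_sub_cancel]
      push_cast
      have : ((Nat.factorial (n + 1) : ℝ)) = (n + 1) * (Nat.factorial n : ℝ) := by
        rw [Nat.factorial_succ]; push_cast; ring
      rw [this]
      have hfac : (Nat.factorial n : ℝ) ≠ 0 := Nat.cast_ne_zero.mpr (Nat.factorial_ne_zero n)
      field_simp
    have h2 := ih.add hterm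
    refine h2.congr_deriv ?_
    simp [S, Finset.sum_range_succ]
    ring

lemma exp_remainder : ∀ (n : ℕ) {x : ℝ}, 0 ≤ x →
    |Real.exp (-x) - S n x| ≤ x ^ n / (Nat.factorial n : ℝ) := by
  intro n
  induction n with
  | zero =>
    intro x hx
    simp only [S, Finset.range_zero, Finset.sum_empty, sub_zero, pow_zero,
      Nat.factorial_zero, Nat.cast_one, div_one]
    rw [abs_of_pos (Real.exp_pos _)]
    calc Real.exp (-x) ≤ Real.exp 0 := Real.exp_le_exp.mpr (by linarith)
      _ = 1 := Real.exp_zero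
  | succ n ih =>
    intro x hx
    have hR : ∀ t ∈ Set.uIcc 0 x, HasDerivAt (fun y => Real.exp (-y) - S (n + 1) y)
        (-(Real.exp (-t) - S n t)) t := by
      intro t _
      have he : HasDerivAt (fun y : ℝ => Real.exp (-y)) (-Real.exp (-t)) t := by
        exact ((Real.hasDerivAt_exp (-t)).comp t (hasDerivAt_neg t)).congr_deriv (by ring)
      have := he.sub (hasDerivAt_S n t)
      refine this.congr_deriv ?_
      ring
    have hScont : ∀ m : ℕ, Continuous (S m) := by
      intro m
      unfold S
      fun_prop
    have hcont : Continuous fun t : ℝ => -(Real.exp (-t) - S n t) := by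
      have := hScont n
      fun_prop
    have hFTC := intervalIntegral.integral_eq_sub_of_hasDerivAt hR
      (hcont.intervalIntegrable 0 x)
    have h0 : Real.exp (-(0 : ℝ)) - S (n + 1) 0 = 0 := by
      have : S (n + 1) 0 = 1 := by
        simp [S, Finset.sum_range_succ', zero_pow]
      simp [this]
    have key : Real.exp (-x) - S (n + 1) x = ∫ t in (0:ℝ)..x, -(Real.exp (-t) - S n t) := by
      rw [hFTC, h0, sub_zero]
    rw [key]
    have hbound : ∀ᵐ t ∂(volume.restrict (Set.uIoc 0 x)),
        ‖-(Real.exp (-t) - S n t)‖ ≤ t ^ n / (Nat.factorial n : ℝ) := by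
      refine (ae_restrict_mem measurableSet_uIoc).mono fun t ht => ?_
      have ht' : 0 < t := by
        rcases Set.mem_uIoc.mp ht with h | h
        · exact h.1
        · linarith [h.1, h.2]
      rw [norm_neg, Real.norm_eq_abs]
      exact ih ht'.le
    have hgint : IntervalIntegrable (fun t : ℝ => t ^ n / (Nat.factorial n : ℝ)) volume 0 x := by
      apply Continuous.intervalIntegrable; fun_prop
    have h1 := intervalIntegral.norm_integral_le_abs_of_norm_le hbound hgint
    rw [Real.norm_eq_abs] at h1
    refine h1.trans ?_
    have : ∫ t in (0:ℝ)..x, t ^ n / (Nat.factorial n : ℝ)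
        = x ^ (n + 1) / (Nat.factorial (n + 1) : ℝ) := by
      rw [intervalIntegral.integral_div, integral_pow]
      rw [Nat.factorial_succ]
      push_cast
      have hfac : (Nat.factorial n : ℝ) ≠ 0 := Nat.cast_ne_zero.mpr (Nat.factorial_ne_zero n)
      field_simp
      simp
    rw [this, abs_of_nonneg (by positivity)]
noncomputable section

lemma integrable_pow_mul_gauss (m : ℕ) :
    Integrable (fun φ : ℝ => φ ^ m * Real.exp (-φ ^ 2 / 2)) := by
  have h := integrable_rpow_mul_exp_neg_mul_sq (b := (1:ℝ)/2) (by norm_num)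
    (s := (m : ℝ)) (neg_one_lt_zero.trans_le (Nat.cast_nonneg m))
  have heq : ∀ x : ℝ, x ^ ((m : ℝ)) * Real.exp (-((1:ℝ)/2) * x ^ 2)
      = x ^ m * Real.exp (-x ^ 2 / 2) := by
    intro x
    rw [Real.rpow_natCast]
    ring_nf
  simp only [heq] at h
  exact h

lemma integrable_gauss : Integrable (fun φ : ℝ => Real.exp (-φ ^ 2 / 2)) := by
  simpa using integrable_pow_mul_gauss 0

lemma gauss_moment (k : ℕ) :
    ∫ φ : ℝ, φ ^ (4 * k) * Real.exp (-φ ^ 2 / 2)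
      = Real.sqrt 2 * 2 ^ (2 * k) * Real.Gamma (1 / 2 + 2 * k) := by
  have heven : ∀ φ : ℝ, φ ^ (4 * k) * Real.exp (-φ ^ 2 / 2)
      = |φ| ^ (4 * k) * Real.exp (-|φ| ^ 2 / 2) := by
    intro φ
    have h1 : |φ| ^ (4 * k) = φ ^ (4 * k) := by
      rw [show 4 * k = 2 * (2 * k) by ring, pow_mul, pow_mul, sq_abs, ← pow_mul, ← pow_mul]
    rw [h1, sq_abs]
  calc ∫ φ : ℝ, φ ^ (4 * k) * Real.exp (-φ ^ 2 / 2)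
      = ∫ φ : ℝ, |φ| ^ (4 * k) * Real.exp (-|φ| ^ 2 / 2) := by
        congr 1; funext φ; exact heven φ
    _ = 2 * ∫ x in Set.Ioi (0:ℝ), x ^ (4 * k) * Real.exp (-x ^ 2 / 2) :=
        integral_comp_abs (f := fun x => x ^ (4 * k) * Real.exp (-x ^ 2 / 2))
    _ = 2 * ∫ x in Set.Ioi (0:ℝ), x ^ ((4 * k : ℕ) : ℝ) * Real.exp (-(1/2) * x ^ (2:ℝ)) := by
        congr 1
        refine setIntegral_congr_fun measurableSet_Ioi (fun x hx => ?_)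
        rw [Real.rpow_natCast, Real.rpow_two]
        ring_nf
    _ = 2 * ((1/2 : ℝ) ^ (-(((4 * k : ℕ) : ℝ) + 1) / 2) * (1 / 2) *
          Real.Gamma ((((4 * k : ℕ) : ℝ) + 1) / 2)) := by
        rw [integral_rpow_mul_exp_neg_mul_rpow (by norm_num)
          (neg_one_lt_zero.trans_le (Nat.cast_nonneg _)) (by norm_num)]
    _ = Real.sqrt 2 * 2 ^ (2 * k) * Real.Gamma (1 / 2 + 2 * k) := by
        have h1 : ((1/2 : ℝ)) ^ (-(((4 * k : ℕ) : ℝ) + 1) / 2)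
            = 2 ^ (2 * k) * Real.sqrt 2 := by
          rw [show ((1:ℝ)/2) = (2:ℝ)⁻¹ by norm_num, Real.inv_rpow (by norm_num),
            ← Real.rpow_neg (by norm_num),
            show -(-(((4 * k : ℕ) : ℝ) + 1) / 2) = ((2 * k : ℕ) : ℝ) + 1/2 by push_cast; ring,
            Real.rpow_add (by norm_num), Real.rpow_natCast, ← Real.sqrt_eq_rpow]
        have h2 : Real.Gamma ((((4 * k : ℕ) : ℝ) + 1) / 2) = Real.Gamma (1 / 2 + 2 * k) := by
          congr 1; push_cast; ring
        rw [h1, h2]; ring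

/-- The partition function of zero-dimensional φ⁴ theory. -/
def Z (lam : ℝ) : ℝ :=
  (1 / Real.sqrt (2 * Real.pi)) * ∫ φ : ℝ, Real.exp (-φ ^ 2 / 2 - (lam / 24) * φ ^ 4)

/-- The k-th term of the perturbative expansion of `Z`. -/
def u (k : ℕ) (lam : ℝ) : ℝ :=
  (1 / Real.sqrt Real.pi) * ((-1) ^ k / (Nat.factorial k : ℝ)) *
    Real.Gamma (1 / 2 + 2 * k) * (lam / 6) ^ k

lemma u_eq (k : ℕ) (lam : ℝ) :
    u k lam = (1 / Real.sqrt (2 * Real.pi)) *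
      ∫ φ : ℝ, ((-(lam / 24)) ^ k / (Nat.factorial k : ℝ)) *
        (φ ^ (4 * k) * Real.exp (-φ ^ 2 / 2)) := by
  rw [integral_const_mul, gauss_moment]
  unfold u
  rw [Real.sqrt_mul (by norm_num : (0:ℝ) ≤ 2)]
  have hπ : (0:ℝ) < Real.sqrt Real.pi := Real.sqrt_pos.mpr Real.pi_pos
  have h2 : (0:ℝ) < Real.sqrt 2 := Real.sqrt_pos.mpr (by norm_num)
  have hneg : (-(lam / 24)) ^ k = (-1) ^ k * (lam / 24) ^ k := neg_pow _ _
  have h4 : ((2:ℝ) ^ (2 * k)) * (lam / 24) ^ k = (lam / 6) ^ k := by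
    rw [pow_mul, ← mul_pow]
    congr 1
    ring
  rw [hneg]
  field_simp
  have h24 : (24:ℝ) ^ k = 2 ^ (2 * k) * 6 ^ k := by
    rw [pow_mul, ← mul_pow]; norm_num
  rw [← h4]
  ring

/-- The perturbative series is an asymptotic expansion of `Z(λ)` as `λ → 0⁺`. -/
theorem perturbative_series_is_asymptotic_expansion :
    ∀ n : ℕ, ∃ C > (0 : ℝ), ∃ δ > (0 : ℝ), ∀ lam : ℝ, 0 < lam → lam < δ →
      |Z lam - ∑ k ∈ Finset.range n, u k lam| ≤ C * lam ^ n := by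
  intro n
  have hΓ : 0 < Real.Gamma (1 / 2 + 2 * n) := Real.Gamma_pos_of_pos (by positivity)
  set M : ℝ := Real.sqrt 2 * 2 ^ (2 * n) * Real.Gamma (1 / 2 + 2 * n) with hM
  have hMpos : 0 < M := by
    apply mul_pos (mul_pos (Real.sqrt_pos.mpr (by norm_num)) (by positivity)) hΓ
  set c : ℝ := 1 / Real.sqrt (2 * Real.pi) with hc'
  have hc : 0 < c := by rw [hc']; positivity
  refine ⟨c * M / (24 ^ n * (Nat.factorial n : ℝ)), by positivity, 1, one_pos, ?_⟩
  intro lam hlam _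
  set F : ℝ → ℝ := fun φ => Real.exp (-φ ^ 2 / 2 - (lam / 24) * φ ^ 4) with hF
  set G : ℕ → ℝ → ℝ := fun k φ =>
    ((-(lam / 24)) ^ k / (Nat.factorial k : ℝ)) * (φ ^ (4 * k) * Real.exp (-φ ^ 2 / 2)) with hG
  have hFint : Integrable F := by
    refine integrable_gauss.mono' ?_ ?_
    · rw [hF]; apply Continuous.aestronglyMeasurable; fun_prop
    · refine Filter.Eventually.of_forall fun φ => ?_
      rw [hF, Real.norm_eq_abs, abs_of_pos (Real.exp_pos _)]
      apply Real.exp_le_exp.mpr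
      have : 0 ≤ (lam / 24) * φ ^ 4 := by positivity
      linarith
  have hGint : ∀ k, Integrable (G k) := fun k =>
    (integrable_pow_mul_gauss (4 * k)).const_mul _
  have hZ : Z lam = c * ∫ φ, F φ := rfl
  have hsum : ∑ k ∈ Finset.range n, u k lam = c * ∫ φ, ∑ k ∈ Finset.range n, G k φ := by
    rw [integral_finset_sum _ (fun k _ => hGint k), Finset.mul_sum]
    exact Finset.sum_congr rfl fun k _ => u_eq k lam
  have hsplit : Z lam - ∑ k ∈ Finset.range n, u k lam
      = c * ∫ φ, (F φ - ∑ k ∈ Finset.range n, G k φ) := by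
    rw [hZ, hsum, ← mul_sub,
      ← integral_sub hFint (integrable_finset_sum _ fun k _ => hGint k)]
  have hpoint : ∀ φ : ℝ, F φ - ∑ k ∈ Finset.range n, G k φ
      = Real.exp (-φ ^ 2 / 2) *
        (Real.exp (-((lam / 24) * φ ^ 4)) - S n ((lam / 24) * φ ^ 4)) := by
    intro φ
    have hFφ : F φ = Real.exp (-φ ^ 2 / 2) * Real.exp (-((lam / 24) * φ ^ 4)) := by
      rw [hF, ← Real.exp_add]
      ring_nf
    have hsumφ : ∑ k ∈ Finset.range n, G k φ
        = Real.exp (-φ ^ 2 / 2) * S n ((lam / 24) * φ ^ 4) := by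
      rw [S, Finset.mul_sum]
      refine Finset.sum_congr rfl fun k _ => ?_
      rw [hG]
      have hpow : (-((lam / 24) * φ ^ 4)) ^ k = (-(lam / 24)) ^ k * φ ^ (4 * k) := by
        rw [show 4 * k = k * 4 by ring, pow_mul', ← mul_pow]
        congr 1
        ring
      rw [hpow]
      ring
    rw [hFφ, hsumφ]
    ring
  have hbound : ∀ φ : ℝ, ‖F φ - ∑ k ∈ Finset.range n, G k φ‖
      ≤ ((lam / 24) ^ n / (Nat.factorial n : ℝ)) * (φ ^ (4 * n) * Real.exp (-φ ^ 2 / 2)) := by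
    intro φ
    rw [hpoint φ, Real.norm_eq_abs, abs_mul, abs_of_pos (Real.exp_pos _)]
    have hx : 0 ≤ (lam / 24) * φ ^ 4 := by positivity
    have h1 := exp_remainder n hx
    calc Real.exp (-φ ^ 2 / 2) * |Real.exp (-((lam / 24) * φ ^ 4)) - S n ((lam / 24) * φ ^ 4)|
        ≤ Real.exp (-φ ^ 2 / 2) * (((lam / 24) * φ ^ 4) ^ n / (Nat.factorial n : ℝ)) :=
          mul_le_mul_of_nonneg_left h1 (Real.exp_pos _).le
      _ = ((lam / 24) ^ n / (Nat.factorial n : ℝ)) * (φ ^ (4 * n) * Real.exp (-φ ^ 2 / 2)) := by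
          rw [mul_pow, show 4 * n = n * 4 by ring, pow_mul']
          ring
  have hIb : Integrable (fun φ : ℝ =>
      ((lam / 24) ^ n / (Nat.factorial n : ℝ)) * (φ ^ (4 * n) * Real.exp (-φ ^ 2 / 2))) :=
    (integrable_pow_mul_gauss (4 * n)).const_mul _
  have hle := norm_integral_le_of_norm_le hIb (Filter.Eventually.of_forall hbound)
  have hval : ∫ φ : ℝ, ((lam / 24) ^ n / (Nat.factorial n : ℝ)) *
      (φ ^ (4 * n) * Real.exp (-φ ^ 2 / 2)) = ((lam / 24) ^ n / (Nat.factorial n : ℝ)) * M := by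
    rw [integral_const_mul, gauss_moment, hM]
  rw [hsplit, abs_mul, abs_of_pos hc]
  rw [Real.norm_eq_abs] at hle
  calc c * |∫ φ, (F φ - ∑ k ∈ Finset.range n, G k φ)|
      ≤ c * (((lam / 24) ^ n / (Nat.factorial n : ℝ)) * M) :=
        mul_le_mul_of_nonneg_left (hle.trans_eq hval) hc.le
    _ = c * M / (24 ^ n * (Nat.factorial n : ℝ)) * lam ^ n := by
        rw [div_pow]
        have hfac : (Nat.factorial n : ℝ) ≠ 0 := Nat.cast_ne_zero.mpr (Nat.factorial_ne_zero n)
        field_simp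
end
end
end

section
/- Terminant identity: for every real ℓ > −1 and every real x > 0, (1/Γ(ℓ+1)) ∫_0^∞ y^ℓ e^{−y}/(1 + y/x) dy = x^{ℓ+1} e^{x} ∫_x^∞ y^{−ℓ−1} e^{−y} dy; i.e. the terminant function Λ_ℓ(x) equals x^{ℓ+1} e^{x} Γ(−ℓ, x). -/
open MeasureTheory

noncomputable section

open Set Real

lemma exp_neg_mul_int {c : ℝ} (hc : 0 < c) :
    ∫ t in Ioi (0:ℝ), Real.exp (-(c * t)) = c⁻¹ := by
  have h := integral_comp_mul_left_Ioi (fun s => Real.exp (-s)) 0 hc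
  simp only [mul_zero, smul_eq_mul] at h
  rw [h, integral_exp_neg_Ioi_zero, mul_one]

lemma int_Ioi_add (g : ℝ → ℝ) (a b : ℝ) :
    ∫ s in Ioi a, g (s + b) = ∫ u in Ioi (a + b), g u := by
  rw [← integral_indicator measurableSet_Ioi, ← integral_indicator measurableSet_Ioi,
    ← integral_add_right_eq_self ((Ioi (a + b)).indicator g) b]
  congr 1
  ext s
  simp only [Set.indicator_apply, Set.mem_Ioi, add_lt_add_iff_right]

/-- The terminant function `Λ_ℓ(x)` equals `x^{ℓ+1} e^x Γ(-ℓ, x)`. -/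
theorem terminant_eq_incomplete_gamma (ℓ x : ℝ) (hl : -1 < ℓ) (hx : 0 < x) :
    (1 / Real.Gamma (ℓ + 1)) *
        ∫ y in Set.Ioi (0 : ℝ), y ^ ℓ * Real.exp (-y) / (1 + y / x) =
      x ^ (ℓ + 1) * Real.exp x * ∫ y in Set.Ioi x, y ^ (-ℓ - 1) * Real.exp (-y) := by
  have hl1 : (0:ℝ) < ℓ + 1 := by linarith
  have hΓ : 0 < Real.Gamma (ℓ + 1) := Real.Gamma_pos_of_pos hl1
  set J := ∫ t in Ioi (0:ℝ), Real.exp (-(x * t)) * (1 + t) ^ (-ℓ - 1) with hJdef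
  set μ := volume.restrict (Ioi (0:ℝ)) with hμ
  set f : ℝ → ℝ → ℝ := fun t y => y ^ ℓ * Real.exp (-y) * (x * Real.exp (-((x + y) * t)))
    with hf
  have h1f : AEStronglyMeasurable (Function.uncurry f) (μ.prod μ) := by
    apply Measurable.aestronglyMeasurable
    fun_prop
  have hG : IntegrableOn (fun y : ℝ => y ^ ℓ * Real.exp (-y)) (Ioi 0) := by
    have := Real.GammaIntegral_convergent hl1
    simp only [add_sub_cancel_right] at this
    exact this.congr_fun (fun y _ => mul_comm _ _) measurableSet_Ioi
  have hpt : ∀ t y : ℝ, f t y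
      = (x * Real.exp (-(x * t))) * (y ^ ℓ * Real.exp (-((1 + t) * y))) := by
    intro t y
    rw [hf]
    simp only
    rw [show (-((x + y) * t)) = (-(x * t)) + (-(y * t)) by ring, Real.exp_add,
      show (-((1 + t) * y)) = (-y) + (-(y * t)) by ring, Real.exp_add]
    ring
  have hint_y : ∀ t : ℝ, 0 ≤ t → Integrable (fun y => f t y) μ := by
    intro t ht
    simp_rw [hpt]
    rw [hμ]
    apply Integrable.const_mul
    refine hG.mono' (by apply Measurable.aestronglyMeasurable; fun_prop) ?_
    filter_upwards [ae_restrict_mem measurableSet_Ioi] with y hy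
    rw [norm_mul, Real.norm_eq_abs, Real.norm_eq_abs, abs_of_nonneg (rpow_nonneg (le_of_lt hy) _),
      Real.abs_exp]
    have : Real.exp (-((1 + t) * y)) ≤ Real.exp (-y) := by
      apply Real.exp_le_exp.2
      nlinarith [le_of_lt (show (0:ℝ) < y from hy)]
    exact mul_le_mul_of_nonneg_left this (rpow_nonneg (le_of_lt hy) _)
  have hval : ∀ t : ℝ, 0 ≤ t →
      ∫ y, f t y ∂μ = Real.Gamma (ℓ + 1) * x *
        (Real.exp (-(x * t)) * (1 + t) ^ (-ℓ - 1)) := by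
    intro t ht
    have h1t : (0:ℝ) < 1 + t := by linarith
    simp_rw [hpt]
    rw [integral_const_mul, hμ]
    have hgam := integral_rpow_mul_exp_neg_mul_Ioi hl1 h1t
    simp only [add_sub_cancel_right] at hgam
    rw [hgam]
    have hpow : ((1:ℝ) / (1 + t)) ^ (ℓ + 1) = (1 + t) ^ (-ℓ - 1) := by
      rw [show -ℓ - 1 = -(ℓ + 1) by ring, Real.rpow_neg h1t.le, one_div,
        ← Real.inv_rpow h1t.le]
    rw [hpow]
    ring
  have hprod : Integrable (Function.uncurry f) (μ.prod μ) := by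
    rw [integrable_prod_iff h1f]
    constructor
    · filter_upwards [ae_restrict_mem measurableSet_Ioi] with t ht
      exact hint_y t (le_of_lt ht)
    · have hnorm : ∀ t : ℝ, 0 ≤ t → ∫ y, ‖f t y‖ ∂μ = ∫ y, f t y ∂μ := by
        intro t ht
        refine integral_congr_ae ?_
        filter_upwards [ae_restrict_mem measurableSet_Ioi] with y hy
        rw [Real.norm_eq_abs, abs_of_nonneg]
        have : (0:ℝ) ≤ y ^ ℓ := rpow_nonneg (le_of_lt hy) _
        positivity
      refine Integrable.mono' (g := fun t => Real.Gamma (ℓ + 1) * x * Real.exp (-(x * t))) ?_ ?_ ?_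
      · have : IntegrableOn (fun t : ℝ => Real.exp (-x * t)) (Ioi 0) :=
          exp_neg_integrableOn_Ioi 0 hx
        simp_rw [neg_mul] at this
        exact this.const_mul _
      · exact (h1f.norm.integral_prod_right')
      · filter_upwards [ae_restrict_mem measurableSet_Ioi] with t ht
        simp only [Function.uncurry_apply_pair]
        rw [hnorm t (le_of_lt ht), hval t (le_of_lt ht), Real.norm_eq_abs, abs_of_nonneg]
        · have ht' : (0:ℝ) < t := ht
          have h1t : (0:ℝ) < 1 + t := by linarith
          have hle : ((1:ℝ) + t) ^ (-ℓ - 1) ≤ 1 :=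
            Real.rpow_le_one_of_one_le_of_nonpos (by linarith) (by linarith)
          calc Real.Gamma (ℓ + 1) * x * (Real.exp (-(x * t)) * (1 + t) ^ (-ℓ - 1))
              ≤ Real.Gamma (ℓ + 1) * x * (Real.exp (-(x * t)) * 1) := by
                apply mul_le_mul_of_nonneg_left _ (by positivity)
                exact mul_le_mul_of_nonneg_left hle (by positivity)
            _ = Real.Gamma (ℓ + 1) * x * Real.exp (-(x * t)) := by ring
        · have h1t : (0:ℝ) < 1 + t := by have : (0:ℝ) < t := ht; linarith
          positivity
  have hLHS : ∫ y in Set.Ioi (0 : ℝ), y ^ ℓ * Real.exp (-y) / (1 + y / x)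
      = ∫ y, (∫ t, f t y ∂μ) ∂μ := by
    rw [hμ]
    refine (setIntegral_congr_fun measurableSet_Ioi (fun y hy => ?_))
    have hy' : (0:ℝ) < y := hy
    have hxy : (0:ℝ) < x + y := by linarith
    have hrw : ∀ t : ℝ, f t y = (y ^ ℓ * Real.exp (-y) * x) * Real.exp (-((x + y) * t)) := by
      intro t; rw [hf]; ring
    simp_rw [hrw]
    rw [integral_const_mul, exp_neg_mul_int hxy]
    field_simp
  have hswap : ∫ y, (∫ t, f t y ∂μ) ∂μ = ∫ t, (∫ y, f t y ∂μ) ∂μ :=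
    (integral_integral_swap hprod).symm
  have hJ : ∫ t, (∫ y, f t y ∂μ) ∂μ = Real.Gamma (ℓ + 1) * x * J := by
    calc ∫ t, (∫ y, f t y ∂μ) ∂μ
        = ∫ t in Ioi (0:ℝ), Real.Gamma (ℓ + 1) * x *
            (Real.exp (-(x * t)) * (1 + t) ^ (-ℓ - 1)) := by
          rw [hμ]
          refine setIntegral_congr_fun measurableSet_Ioi (fun t ht => ?_)
          rw [← hμ, hval t (le_of_lt ht)]
      _ = Real.Gamma (ℓ + 1) * x * J := by rw [integral_const_mul, hJdef]
  have hRHS : ∫ y in Set.Ioi x, y ^ (-ℓ - 1) * Real.exp (-y)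
      = x ^ (-ℓ) * Real.exp (-x) * J := by
    have h1 : ∫ y in Set.Ioi x, y ^ (-ℓ - 1) * Real.exp (-y)
        = ∫ s in Ioi (0:ℝ), (s + x) ^ (-ℓ - 1) * Real.exp (-(s + x)) := by
      rw [int_Ioi_add (fun u => u ^ (-ℓ - 1) * Real.exp (-u)) 0 x, zero_add]
    have h2 := integral_comp_mul_left_Ioi
      (fun s => (s + x) ^ (-ℓ - 1) * Real.exp (-(s + x))) 0 hx
    simp only [mul_zero, smul_eq_mul] at h2
    have h3 : ∫ s in Ioi (0:ℝ), (s + x) ^ (-ℓ - 1) * Real.exp (-(s + x))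
        = x * ∫ t in Ioi (0:ℝ), (x * t + x) ^ (-ℓ - 1) * Real.exp (-(x * t + x)) := by
      rw [h2, ← mul_assoc, mul_inv_cancel₀ hx.ne', one_mul]
    have h4 : ∫ t in Ioi (0:ℝ), (x * t + x) ^ (-ℓ - 1) * Real.exp (-(x * t + x))
        = x ^ (-ℓ - 1) * Real.exp (-x) * J := by
      rw [hJdef, ← integral_const_mul, hμ]
      refine setIntegral_congr_fun measurableSet_Ioi (fun t ht => ?_)
      have h1t : (0:ℝ) < 1 + t := by have : (0:ℝ) < t := ht; linarith
      rw [show x * t + x = x * (1 + t) by ring, Real.mul_rpow hx.le h1t.le,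
        show (-(x * (1 + t))) = (-(x * t)) + (-x) by ring, Real.exp_add]
      ring
    have hxp : x * x ^ (-ℓ - 1) = x ^ (-ℓ) := by
      rw [show (-ℓ) = (-ℓ - 1) + 1 by ring, Real.rpow_add hx, Real.rpow_one]
      ring
    rw [h1, h3, h4, ← hxp]
    ring
  rw [hLHS, hswap, hJ, hRHS]
  have e1 : x ^ (ℓ + 1) * x ^ (-ℓ) = x := by
    rw [← Real.rpow_add hx, show ℓ + 1 + (-ℓ) = 1 by ring, Real.rpow_one]
  have e2 : Real.exp x * Real.exp (-x) = 1 := by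
    rw [← Real.exp_add]; simp
  have hr : x ^ (ℓ + 1) * Real.exp x * (x ^ (-ℓ) * Real.exp (-x) * J) = x * J := by
    calc x ^ (ℓ + 1) * Real.exp x * (x ^ (-ℓ) * Real.exp (-x) * J)
        = (x ^ (ℓ + 1) * x ^ (-ℓ)) * (Real.exp x * Real.exp (-x)) * J := by ring
      _ = x * J := by rw [e1, e2]; ring
  rw [hr]
  field_simp
end
end
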